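/- arXiv:1705.08492 — 2 statements merged into one kernel-verified Lean document; each statement's English description precedes it below -/
import Mathlib

section
/- E[Z] = E[Y | T = h(X)], i.e., the importance-weighted random variable Z = Σ_{t=0}^K (1/p_t) · Y · 1{h(X)=t} · 1{T=t} has expectation equal to the expected response when treatment is assigned by the policy h. -/
open MeasureTheory ProbabilityTheory

/-- **Lemma 1 (unbiasedness of the importance-weighted response).**
In a randomized experiment where the treatment `T` (with values in `{0,…,K}`,
`P(T = t) = p t > 0`) is independent of the features `X`, for any measurable
policy `h`, the random variable
`Z = ∑ t, (1/p t) ⬝ Y ⬝ 1{h(X) = t} ⬝ 1{T = t}`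
satisfies `E[Z] = E[Y | T = h(X)]`, where the right-hand side is
`∑ t, E[Y | h(X) = t, T = t] ⬝ P(h(X) = t)`. -/
theorem stmt_0 {Ω 𝕏 : Type*} [MeasurableSpace Ω] [MeasurableSpace 𝕏]
    (P : Measure Ω) [IsProbabilityMeasure P] (K : ℕ)
    (X : Ω → 𝕏) (T : Ω → Fin (K + 1)) (Y : Ω → ℝ)
    (hX : Measurable X) (hT : Measurable T) (hY : Integrable Y P)
    (hInd : IndepFun X T P)
    (p : Fin (K + 1) → ℝ) (hp : ∀ t, 0 < p t)
    (hpt : ∀ t, (P {ω | T ω = t}).toReal = p t)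
    (h : 𝕏 → Fin (K + 1)) (hh : Measurable h) :
    ∫ ω, (∑ t : Fin (K + 1), (1 / p t) * Y ω *
        (if h (X ω) = t then (1 : ℝ) else 0) *
        (if T ω = t then (1 : ℝ) else 0)) ∂P
      = ∑ t : Fin (K + 1),
          ((∫ ω in {ω | h (X ω) = t ∧ T ω = t}, Y ω ∂P) /
              (P {ω | h (X ω) = t ∧ T ω = t}).toReal) *
            (P {ω | h (X ω) = t}).toReal := by

  have hmeasA : ∀ t : Fin (K+1), MeasurableSet {ω | h (X ω) = t} :=
    fun t => (hh.comp hX) (measurableSet_singleton t)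
  have hmeasB : ∀ t : Fin (K+1), MeasurableSet {ω | T ω = t} :=
    fun t => hT (measurableSet_singleton t)
  have hSeq : ∀ t : Fin (K+1), {ω | h (X ω) = t ∧ T ω = t}
      = (h ∘ X) ⁻¹' {t} ∩ T ⁻¹' {t} := fun t => rfl
  have hmeasS : ∀ t : Fin (K+1), MeasurableSet {ω | h (X ω) = t ∧ T ω = t} :=
    fun t => (hmeasA t).inter (hmeasB t)
  have hfeq : ∀ t : Fin (K+1), (fun ω => (1 / p t) * Y ω *
        (if h (X ω) = t then (1 : ℝ) else 0) *
        (if T ω = t then (1 : ℝ) else 0))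
      = Set.indicator {ω | h (X ω) = t ∧ T ω = t} (fun ω => (1 / p t) * Y ω) := by
    intro t; funext ω
    by_cases h1 : h (X ω) = t <;> by_cases h2 : T ω = t <;>
      simp [Set.indicator, h1, h2]
  have hint : ∀ t : Fin (K+1), Integrable (fun ω => (1 / p t) * Y ω *
        (if h (X ω) = t then (1 : ℝ) else 0) *
        (if T ω = t then (1 : ℝ) else 0)) P := by
    intro t
    rw [hfeq t]
    exact (hY.const_mul _).indicator (hmeasS t)
  rw [integral_finset_sum _ (fun t _ => hint t)]
  refine Finset.sum_congr rfl fun t _ => ?_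
  have hmul : P {ω | h (X ω) = t ∧ T ω = t}
      = P {ω | h (X ω) = t} * P {ω | T ω = t} := by
    rw [hSeq t]
    exact (hInd.comp hh measurable_id).measure_inter_preimage_eq_mul
      _ _ (measurableSet_singleton t) (measurableSet_singleton t)
  have hL : ∫ ω, (1 / p t) * Y ω *
        (if h (X ω) = t then (1 : ℝ) else 0) *
        (if T ω = t then (1 : ℝ) else 0) ∂P
      = (1 / p t) * ∫ ω in {ω | h (X ω) = t ∧ T ω = t}, Y ω ∂P := by
    rw [hfeq t, integral_indicator (hmeasS t), integral_const_mul]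
  rw [hL]
  by_cases hA : P {ω | h (X ω) = t} = 0
  · have hS0 : P {ω | h (X ω) = t ∧ T ω = t} = 0 := by
      rw [hmul, hA, zero_mul]
    have : ∫ ω in {ω | h (X ω) = t ∧ T ω = t}, Y ω ∂P = 0 := by
      rw [Measure.restrict_eq_zero.mpr hS0, integral_zero_measure]
    rw [hA, hS0, this]
    simp
  · have hfinA : P {ω | h (X ω) = t} ≠ ⊤ := measure_ne_top P _
    have hSr : (P {ω | h (X ω) = t ∧ T ω = t}).toReal
        = (P {ω | h (X ω) = t}).toReal * p t := by
      rw [hmul, ENNReal.toReal_mul, hpt t]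
    rw [hSr]
    have hAr : (P {ω | h (X ω) = t}).toReal ≠ 0 :=
      ENNReal.toReal_ne_zero.mpr ⟨hA, hfinA⟩
    field_simp
end

section
/- If the response has the same distribution under all treatments within a region φ (i.e., E[Y | X∈φ_A, T=t] does not depend on t for every measurable φ_A ⊆ φ with positive probability), then for every policy h, the expected response restricted to φ equals E[Y | X∈φ, T=0]; i.e., no policy can outperform the control on φ. -/
open MeasureTheory ProbabilityTheory

/-- **No policy can outperform the control on a treatment-insensitive region.**
If, within a region `φ`, the conditional expected response `E[Y | X∈A, T=t]` does
not depend on the treatment `t` (for every measurable `A ⊆ φ` of positive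
probability), then for every measurable policy `h`, the expected response on `φ`,
`∑ₜ E[Y | X ∈ φ ∩ h⁻¹{t}, T = t] ⬝ P(h(X)=t | X∈φ)`,
equals `E[Y | X∈φ, T=0]`.  (Terms with `P(X ∈ φ ∩ h⁻¹{t}) = 0` vanish, since in
that case both the set integral and the conditional probability factor are `0`.) -/
theorem stmt_4 {Ω 𝕏 : Type*} [MeasurableSpace Ω] [MeasurableSpace 𝕏]
    (P : Measure Ω) [IsProbabilityMeasure P] (K : ℕ)
    (X : Ω → 𝕏) (T : Ω → Fin (K + 1)) (Y : Ω → ℝ)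
    (hX : Measurable X) (hT : Measurable T) (hY : Integrable Y P)
    (hInd : IndepFun X T P)
    (hp : ∀ t, 0 < (P {ω | T ω = t}).toReal)
    (φ : Set 𝕏) (hφm : MeasurableSet φ) (hφ : 0 < (P {ω | X ω ∈ φ}).toReal)
    -- within φ, the conditional expected response does not depend on the treatment
    (hsame : ∀ A : Set 𝕏, MeasurableSet A → A ⊆ φ → 0 < (P {ω | X ω ∈ A}).toReal →
      ∀ t : Fin (K + 1),
        (∫ ω in {ω | X ω ∈ A ∧ T ω = t}, Y ω ∂P) /
            (P {ω | X ω ∈ A ∧ T ω = t}).toReal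
          = (∫ ω in {ω | X ω ∈ A ∧ T ω = 0}, Y ω ∂P) /
              (P {ω | X ω ∈ A ∧ T ω = 0}).toReal)
    (h : 𝕏 → Fin (K + 1)) (hh : Measurable h) :
    ∑ t : Fin (K + 1),
        ((∫ ω in {ω | X ω ∈ φ ∧ h (X ω) = t ∧ T ω = t}, Y ω ∂P) /
            (P {ω | X ω ∈ φ ∧ h (X ω) = t ∧ T ω = t}).toReal) *
          ((P {ω | X ω ∈ φ ∧ h (X ω) = t}).toReal / (P {ω | X ω ∈ φ}).toReal)
      = (∫ ω in {ω | X ω ∈ φ ∧ T ω = 0}, Y ω ∂P) /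
          (P {ω | X ω ∈ φ ∧ T ω = 0}).toReal := by
  classical
  set A : Fin (K + 1) → Set 𝕏 := fun t => φ ∩ h ⁻¹' {t} with hA
  have hAm : ∀ t, MeasurableSet (A t) := fun t => hφm.inter (hh (measurableSet_singleton t))
  have hAsub : ∀ t, A t ⊆ φ := fun t => Set.inter_subset_left
  -- set identifications
  have hSet1 : ∀ t : Fin (K+1), {ω | X ω ∈ φ ∧ h (X ω) = t} = X ⁻¹' (A t) := by
    intro t; ext ω; simp [hA]
  have hSet2 : ∀ t s : Fin (K+1), {ω | X ω ∈ φ ∧ h (X ω) = t ∧ T ω = s}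
      = X ⁻¹' (A t) ∩ T ⁻¹' {s} := by
    intro t s; ext ω; simp [hA, and_assoc]
  have hSetA : ∀ t s : Fin (K+1), {ω | X ω ∈ A t ∧ T ω = s}
      = X ⁻¹' (A t) ∩ T ⁻¹' {s} := by
    intro t s; ext ω; simp [hA]
  have hSetφ : ∀ s : Fin (K+1), {ω | X ω ∈ φ ∧ T ω = s} = X ⁻¹' φ ∩ T ⁻¹' {s} := by
    intro s; ext ω; simp
  have hXφ : {ω | X ω ∈ φ} = X ⁻¹' φ := rfl
  -- independence
  have hmul : ∀ (B : Set 𝕏), MeasurableSet B → ∀ s : Fin (K+1),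
      P (X ⁻¹' B ∩ T ⁻¹' {s}) = P (X ⁻¹' B) * P (T ⁻¹' {s}) :=
    fun B hB s => hInd.measure_inter_preimage_eq_mul B {s} hB (measurableSet_singleton s)
  have hT0 : {ω | T ω = (0 : Fin (K+1))} = T ⁻¹' {0} := rfl
  have hp0 : 0 < (P (T ⁻¹' {(0 : Fin (K+1))})).toReal := hp 0
  set p0 : ℝ := (P (T ⁻¹' {(0 : Fin (K+1))})).toReal with hp0def
  set pφ : ℝ := (P (X ⁻¹' φ)).toReal with hpφdef
  have hpφ : 0 < pφ := by rwa [hXφ] at hφ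
  have htoRealmul : ∀ (B : Set 𝕏), MeasurableSet B → ∀ s : Fin (K+1),
      (P (X ⁻¹' B ∩ T ⁻¹' {s})).toReal = (P (X ⁻¹' B)).toReal * (P (T ⁻¹' {s})).toReal := by
    intro B hB s; rw [hmul B hB s, ENNReal.toReal_mul]
  -- per-term value
  have hterm : ∀ t : Fin (K+1),
      ((∫ ω in {ω | X ω ∈ φ ∧ h (X ω) = t ∧ T ω = t}, Y ω ∂P) /
            (P {ω | X ω ∈ φ ∧ h (X ω) = t ∧ T ω = t}).toReal) *
          ((P {ω | X ω ∈ φ ∧ h (X ω) = t}).toReal / (P {ω | X ω ∈ φ}).toReal)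
        = (∫ ω in X ⁻¹' (A t) ∩ T ⁻¹' {(0 : Fin (K+1))}, Y ω ∂P) / (pφ * p0) := by
    intro t
    rw [hSet2 t t, hSet1 t, hXφ]
    by_cases hz : P (X ⁻¹' (A t)) = 0
    · have hnull : P (X ⁻¹' (A t) ∩ T ⁻¹' {t}) = 0 :=
        measure_mono_null Set.inter_subset_left hz
      have hnull0 : P (X ⁻¹' (A t) ∩ T ⁻¹' {(0 : Fin (K+1))}) = 0 :=
        measure_mono_null Set.inter_subset_left hz
      rw [Measure.restrict_eq_zero.mpr hnull, Measure.restrict_eq_zero.mpr hnull0]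
      simp [hz]
    · have hpos : 0 < (P (X ⁻¹' (A t))).toReal := by
        have := measure_lt_top P (X ⁻¹' (A t))
        exact ENNReal.toReal_pos hz this.ne
      have hs := hsame (A t) (hAm t) (hAsub t) hpos t
      rw [hSetA t t, hSetA t 0] at hs
      rw [hs, htoRealmul (A t) (hAm t) 0, ← hp0def, ← hpφdef]
      field_simp [hpos.ne', hpφ.ne', hp0.ne']
  rw [Finset.sum_congr rfl (fun t _ => hterm t)]
  -- sum the integrals
  have hdisj : Pairwise (Function.onFun Disjoint fun t : Fin (K+1) =>
      X ⁻¹' (A t) ∩ T ⁻¹' {(0 : Fin (K+1))}) := by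
    intro i j hij
    simp only [Function.onFun, Set.disjoint_left]
    rintro ω ⟨hi, -⟩ ⟨hj, -⟩
    exact hij (hi.2.symm.trans hj.2)
  have hms : ∀ t : Fin (K+1), MeasurableSet (X ⁻¹' (A t) ∩ T ⁻¹' {(0 : Fin (K+1))}) :=
    fun t => (hX (hAm t)).inter (hT (measurableSet_singleton _))
  have hunion : (⋃ t : Fin (K+1), X ⁻¹' (A t) ∩ T ⁻¹' {(0 : Fin (K+1))})
      = X ⁻¹' φ ∩ T ⁻¹' {(0 : Fin (K+1))} := by
    ext ω
    simp only [Set.mem_iUnion, Set.mem_inter_iff, Set.mem_preimage, hA, Set.mem_singleton_iff]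
    constructor
    · rintro ⟨t, ⟨hφω, -⟩, h0⟩; exact ⟨hφω, h0⟩
    · rintro ⟨hφω, h0⟩; exact ⟨h (X ω), ⟨hφω, rfl⟩, h0⟩
  have hsumint : ∑ t : Fin (K+1), ∫ ω in X ⁻¹' (A t) ∩ T ⁻¹' {(0 : Fin (K+1))}, Y ω ∂P
      = ∫ ω in X ⁻¹' φ ∩ T ⁻¹' {(0 : Fin (K+1))}, Y ω ∂P := by
    rw [← hunion, integral_iUnion_fintype hms hdisj (fun t => hY.integrableOn)]
  rw [← Finset.sum_div, hsumint, hSetφ 0, htoRealmul φ hφm 0]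
end
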